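/- For every integer D ≥ 2 there exist a positive integer m with m ≤ 2(D−1)(2D+1) and a homogeneous noncommutative polynomial p : (Fin m → Fin 2) → ℂ of degree m in two variables such that p is a matrix polynomial identity for dimension D−1 (Σ_j p(j)·X_{j_1}⋯X_{j_m} = 0 for all X₁,X₂ ∈ M_{D−1}(ℂ)), but p is not a matrix polynomial identity for dimension D: there exist X₁, X₂ ∈ M_D(ℂ) with Σ_j p(j)·X_{j_1}⋯X_{j_m} ≠ 0. -/

import Mathlib

open Matrix

/-- The ordered matrix product `X_{i_1} ⋯ X_{i_n}` associated to an index string `i`. -/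
noncomputable def mpsProd {d D n : ℕ} (X : Fin d → Matrix (Fin D) (Fin D) ℂ)
    (i : Fin n → Fin d) : Matrix (Fin D) (Fin D) ℂ :=
  ((List.finRange n).map fun t => X (i t)).prod

namespace Stmt8Aux

open Equiv Finset
open Fin.NatCast

/-- The interleaved product `(g 0 * Y) * (g 1 * Y) * ⋯`. -/
noncomputable def itp {q D : ℕ} (Y : Matrix (Fin q) (Fin q) ℂ)
    (g : Fin D → Matrix (Fin q) (Fin q) ℂ) : Matrix (Fin q) (Fin q) ℂ :=
  ((List.finRange D).map fun t => g t * Y).prod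

lemma itp_update {q D : ℕ} (Y : Matrix (Fin q) (Fin q) ℂ)
    (g : Fin D → Matrix (Fin q) (Fin q) ℂ) (j : Fin D) :
    ∃ A B : Matrix (Fin q) (Fin q) ℂ,
      ∀ x, itp Y (Function.update g j x) = A * (x * Y) * B := by
  classical
  have h1 : j.val < (List.finRange D).length := by simpa using j.isLt
  have hsplit : List.finRange D =
      (List.finRange D).take j.val ++ j :: (List.finRange D).drop (j.val + 1) := by
    conv_lhs => rw [← List.take_append_drop j.val (List.finRange D)]
    congr 1
    rw [List.drop_eq_getElem_cons h1]
    congr 1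
    simp [List.getElem_finRange]
  have hnd := List.nodup_finRange D
  rw [hsplit, List.nodup_append] at hnd
  obtain ⟨-, hnd2, hdisj⟩ := hnd
  have hjT : j ∉ (List.finRange D).take j.val := fun h => hdisj j h j List.mem_cons_self rfl
  have hjD : j ∉ (List.finRange D).drop (j.val + 1) := (List.nodup_cons.mp hnd2).1
  refine ⟨(((List.finRange D).take j.val).map fun t => g t * Y).prod,
    (((List.finRange D).drop (j.val + 1)).map fun t => g t * Y).prod, fun x => ?_⟩
  unfold itp
  conv_lhs => rw [hsplit]
  rw [List.map_append, List.prod_append, List.map_cons, List.prod_cons,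
    Function.update_self]
  have e1 : ((List.finRange D).take j.val).map (fun t => Function.update g j x t * Y)
      = ((List.finRange D).take j.val).map (fun t => g t * Y) :=
    List.map_congr_left fun t ht => by
      rw [Function.update_of_ne (fun (h : t = j) => hjT (h ▸ ht))]
  have e2 : ((List.finRange D).drop (j.val + 1)).map (fun t => Function.update g j x t * Y)
      = ((List.finRange D).drop (j.val + 1)).map (fun t => g t * Y) :=
    List.map_congr_left fun t ht => by
      rw [Function.update_of_ne (fun (h : t = j) => hjD (h ▸ ht))]
  rw [e1, e2]
  simp [mul_assoc]

lemma itp_update_sum {q D : ℕ} (Y : Matrix (Fin q) (Fin q) ℂ)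
    (g : Fin D → Matrix (Fin q) (Fin q) ℂ) (j : Fin D) {ι : Type} [Fintype ι]
    (c : ι → ℂ) (v : ι → Matrix (Fin q) (Fin q) ℂ) :
    itp Y (Function.update g j (∑ k, c k • v k))
      = ∑ k, c k • itp Y (Function.update g j (v k)) := by
  obtain ⟨A, B, hAB⟩ := itp_update Y g j
  simp only [hAB]
  simp [Finset.sum_mul, Finset.mul_sum, smul_mul_assoc, mul_smul_comm, mul_assoc]

lemma alt_sum_eq_zero {q D : ℕ} (Y : Matrix (Fin q) (Fin q) ℂ)
    (B : Fin D → Matrix (Fin q) (Fin q) ℂ) (i j : Fin D) (hij : i ≠ j) (hB : B i = B j) :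
    ∑ σ : Perm (Fin D), ((Perm.sign σ : ℤ) : ℂ) • itp Y (B ∘ σ) = 0 := by
  classical
  set S := ∑ σ : Perm (Fin D), ((Perm.sign σ : ℤ) : ℂ) • itp Y (B ∘ σ) with hS
  have key : ∀ σ : Perm (Fin D), B ∘ ((Equiv.swap i j) * σ) = B ∘ σ := by
    intro σ; funext t
    simp only [Function.comp_apply, Perm.mul_apply]
    rcases eq_or_ne (σ t) i with h | h
    · rw [h, Equiv.swap_apply_left, ← hB]
    rcases eq_or_ne (σ t) j with h2 | h2
    · rw [h2, Equiv.swap_apply_right, hB]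
    · rw [Equiv.swap_apply_of_ne_of_ne h h2]
  have hself : S = -S := by
    conv_lhs => rw [hS, ← Equiv.sum_comp (Equiv.mulLeft (Equiv.swap i j))
      (fun σ => ((Perm.sign σ : ℤ) : ℂ) • itp Y (B ∘ σ))]
    rw [hS, ← Finset.sum_neg_distrib]
    refine Finset.sum_congr rfl fun σ _ => ?_
    have hs : Perm.sign ((Equiv.swap i j) * σ) = -Perm.sign σ := by
      rw [Perm.sign_mul, Perm.sign_swap hij, neg_one_mul]
    have : (Equiv.mulLeft (Equiv.swap i j)) σ = (Equiv.swap i j) * σ := rfl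
    rw [this, key, hs]
    push_cast
    rw [neg_smul]
  have h2 : (2 : ℂ) • S = 0 := by
    rw [two_smul]
    nth_rewrite 2 [hself]
    exact add_neg_cancel S
  exact (smul_eq_zero.mp h2).resolve_left two_ne_zero

lemma vanish {n : ℕ} (hn : 0 < n) (A Y : Matrix (Fin n) (Fin n) ℂ) :
    ∑ σ : Perm (Fin (n + 1)), ((Perm.sign σ : ℤ) : ℂ) •
      itp Y ((fun k : Fin (n + 1) => A ^ (k : ℕ)) ∘ σ) = 0 := by
  classical
  haveI : Nonempty (Fin n) := ⟨⟨0, hn⟩⟩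
  obtain ⟨c, hc⟩ : ∃ c : Fin n → ℂ, A ^ n = ∑ k : Fin n, c k • A ^ (k : ℕ) := by
    have h := A.aeval_self_charpoly
    have hdeg : A.charpoly.natDegree = n := by
      rw [Matrix.charpoly_natDegree_eq_dim, Fintype.card_fin]
    rw [Polynomial.aeval_eq_sum_range' (n := n + 1) (by omega), Finset.sum_range_succ] at h
    have hlead : A.charpoly.coeff n = 1 := by
      have hm := A.charpoly_monic.coeff_natDegree
      rwa [hdeg] at hm
    rw [hlead, one_smul] at h
    refine ⟨fun k => -(A.charpoly.coeff (k : ℕ)), ?_⟩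
    have e : ∑ k : Fin n, -(A.charpoly.coeff (k : ℕ)) • A ^ (k : ℕ)
        = -∑ i ∈ Finset.range n, A.charpoly.coeff i • A ^ i := by
      rw [← Fin.sum_univ_eq_sum_range (fun i => A.charpoly.coeff i • A ^ i) n,
        ← Finset.sum_neg_distrib]
      exact Finset.sum_congr rfl fun k _ => by rw [neg_smul]
    rw [e]
    exact eq_neg_of_add_eq_zero_right h
  set B : Fin (n + 1) → Matrix (Fin n) (Fin n) ℂ := fun k => A ^ (k : ℕ) with hBdef
  have htop : B (Fin.last n) = ∑ k : Fin n, c k • B (Fin.castSucc k) := by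
    simpa [hBdef] using hc
  have hstep : ∀ σ : Perm (Fin (n + 1)),
      ((Perm.sign σ : ℤ) : ℂ) • itp Y (B ∘ σ)
        = ∑ k : Fin n, c k • (((Perm.sign σ : ℤ) : ℂ) •
            itp Y ((Function.update B (Fin.last n) (B (Fin.castSucc k))) ∘ σ)) := by
    intro σ
    have e0 : B ∘ σ = Function.update (B ∘ σ) (σ⁻¹ (Fin.last n)) (B (Fin.last n)) := by
      have h1 : B (Fin.last n) = (B ∘ σ) (σ⁻¹ (Fin.last n)) := by simp
      rw [h1, Function.update_eq_self]
    have ecomp : ∀ v, (Function.update B (Fin.last n) v) ∘ σ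
        = Function.update (B ∘ σ) (σ⁻¹ (Fin.last n)) v := fun v => by
      simpa using Function.update_comp_equiv B σ (Fin.last n) v
    rw [e0, htop, itp_update_sum, Finset.smul_sum]
    exact Finset.sum_congr rfl fun k _ => by rw [ecomp, smul_comm]
  rw [Finset.sum_congr rfl fun σ _ => hstep σ, Finset.sum_comm]
  refine Finset.sum_eq_zero fun k _ => ?_
  rw [← Finset.smul_sum]
  have hne : Fin.last n ≠ Fin.castSucc k := (Fin.castSucc_lt_last k).ne'
  have hval : (Function.update B (Fin.last n) (B (Fin.castSucc k))) (Fin.last n)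
      = (Function.update B (Fin.last n) (B (Fin.castSucc k))) (Fin.castSucc k) := by
    rw [Function.update_self, Function.update_of_ne hne.symm]
  rw [alt_sum_eq_zero Y _ (Fin.last n) (Fin.castSucc k) hne hval, smul_zero]

section NonVanish

variable {D : ℕ} [NeZero D]

/-- The diagonal vector `0, 1, …, D-1`. -/
noncomputable def dg : Fin D → ℂ := fun i => ((i : ℕ) : ℂ)

/-- The cyclic shift matrix. -/
noncomputable def YD : Matrix (Fin D) (Fin D) ℂ :=
  Matrix.of fun a b => if a = b + 1 then 1 else 0

lemma YD_mulVec (s : Fin D) : YD *ᵥ Pi.single s 1 = Pi.single (s + 1) (1 : ℂ) := by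
  rw [Matrix.mulVec_single]
  funext i
  simp [YD, Pi.single_apply]

/-- The scalar picked up by the product of `A^a * Y` factors on a basis vector. -/
noncomputable def sc (d : Fin D → ℂ) : List ℕ → Fin D → ℂ
  | [], _ => 1
  | a :: es, s => sc d es s * (d (s + (es.length : Fin D) + 1)) ^ a

lemma prodAY_mulVec (d : Fin D → ℂ) (es : List ℕ) (s : Fin D) :
    ((es.map fun a => diagonal d ^ a * YD).prod) *ᵥ Pi.single s 1
      = sc d es s • (Pi.single (s + ((es.length : ℕ) : Fin D)) (1 : ℂ) : Fin D → ℂ) := by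
  induction es with
  | nil =>
    simp only [List.map_nil, List.prod_nil, List.length_nil, Nat.cast_zero, add_zero, sc,
      one_smul, Matrix.one_mulVec]
  | cons a es ih =>
    rw [List.map_cons, List.prod_cons, ← Matrix.mulVec_mulVec, ih, Matrix.mulVec_smul,
      ← Matrix.mulVec_mulVec, YD_mulVec, Matrix.diagonal_pow, Matrix.diagonal_mulVec_single]
    have hidx : s + ((es.length : ℕ) : Fin D) + 1 = s + (((a :: es).length : ℕ) : Fin D) := by
      rw [List.length_cons, Nat.cast_add, Nat.cast_one, add_assoc]
    have hsingle : Pi.single (s + ((es.length : ℕ) : Fin D) + 1)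
          ((d ^ a) (s + ((es.length : ℕ) : Fin D) + 1) * 1)
        = ((d (s + ((es.length : ℕ) : Fin D) + 1)) ^ a) •
            (Pi.single (s + ((es.length : ℕ) : Fin D) + 1) (1 : ℂ) : Fin D → ℂ) := by
      funext u
      simp [Pi.single_apply, Pi.pow_apply, mul_ite]
    rw [hsingle, smul_smul, ← hidx]
    show _ = (sc d es s * (d (s + ((es.length : ℕ) : Fin D) + 1)) ^ a) • _
    rfl

lemma sc_finRange (d : Fin D → ℂ) :
    ∀ (q : ℕ) (g : Fin q → ℕ) (s : Fin D),
      sc d ((List.finRange q).map fun t => g t) s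
        = ∏ t : Fin q, (d (s + (((q - (t : ℕ)) : ℕ) : Fin D))) ^ (g t) := by
  intro q
  induction q with
  | zero => intro g s; simp [sc]
  | succ n ih =>
    intro g s
    rw [List.finRange_succ, List.map_cons, List.map_map, Fin.prod_univ_succ]
    show sc d (g 0 :: ((List.finRange n).map fun t => (g ∘ Fin.succ) t)) s = _
    rw [sc, ih (g ∘ Fin.succ) s]
    have hlen : (((List.finRange n).map fun t => (g ∘ Fin.succ) t).length : ℕ) = n := by simp
    rw [hlen]
    have h0 : s + ((n : ℕ) : Fin D) + 1 = s + (((n + 1 - (0 : ℕ)) : ℕ) : Fin D) := by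
      rw [Nat.sub_zero, Nat.cast_add, Nat.cast_one, add_assoc]
    have hsucc : ∀ t : Fin n, (n - (t : ℕ)) = (n + 1 - ((t.succ : ℕ))) := by
      intro t; simp only [Fin.val_succ]; omega
    rw [h0, mul_comm]
    congr 1
    exact Finset.prod_congr rfl fun t _ => by rw [Function.comp_apply, hsucc t]

end NonVanish

lemma nonvanish {D : ℕ} [NeZero D] :
    ∑ σ : Perm (Fin D), ((Perm.sign σ : ℤ) : ℂ) •
        itp YD ((fun k : Fin D => (diagonal dg : Matrix (Fin D) (Fin D) ℂ) ^ (k : ℕ)) ∘ σ) ≠ 0 := by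
  set w : Fin D → ℂ := fun t => dg ((((D - (t : ℕ)) : ℕ)) : Fin D) with hw
  have hwinj : Function.Injective w := by
    intro a b hab
    have ha := a.isLt
    have hb := b.isLt
    have h1 : ((((D - (a : ℕ)) : ℕ) : Fin D) : ℕ) = ((((D - (b : ℕ)) : ℕ) : Fin D) : ℕ) := by
      have := hab
      simp only [hw, dg] at this
      exact_mod_cast this
    rw [Fin.val_natCast, Fin.val_natCast] at h1
    have hmod : ∀ k : Fin D, (D - (k : ℕ)) % D = if (k : ℕ) = 0 then 0 else D - (k : ℕ) := by
      intro k
      rcases Nat.eq_zero_or_pos (k : ℕ) with h | h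
      · simp [h]
      · rw [if_neg h.ne', Nat.mod_eq_of_lt (by omega)]
    rw [hmod a, hmod b] at h1
    have : (a : ℕ) = (b : ℕ) := by
      split_ifs at h1 <;> omega
    exact Fin.ext this
  intro h0
  have h1 := congrArg (fun M => M *ᵥ Pi.single (0 : Fin D) (1 : ℂ)) h0
  simp only [Matrix.zero_mulVec] at h1
  have hsum : (∑ σ : Perm (Fin D), ((Perm.sign σ : ℤ) : ℂ) •
        itp YD ((fun k : Fin D => (diagonal dg : Matrix (Fin D) (Fin D) ℂ) ^ (k : ℕ)) ∘ σ))
          *ᵥ Pi.single (0 : Fin D) (1 : ℂ)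
      = ∑ σ : Perm (Fin D), (((Perm.sign σ : ℤ) : ℂ) •
          itp YD ((fun k : Fin D => (diagonal dg : Matrix (Fin D) (Fin D) ℂ) ^ (k : ℕ)) ∘ σ))
            *ᵥ Pi.single (0 : Fin D) (1 : ℂ) :=
    map_sum (AddMonoidHom.mk' (fun M : Matrix (Fin D) (Fin D) ℂ => M *ᵥ Pi.single (0 : Fin D) 1)
      (fun M N => Matrix.add_mulVec M N _)) _ _
  have hterm : ∀ σ : Perm (Fin D),
      (((Perm.sign σ : ℤ) : ℂ) •
          itp YD ((fun k : Fin D => (diagonal dg : Matrix (Fin D) (Fin D) ℂ) ^ (k : ℕ)) ∘ σ))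
            *ᵥ Pi.single (0 : Fin D) (1 : ℂ)
        = (((Perm.sign σ : ℤ) : ℂ) * ∏ t : Fin D, (w t) ^ ((σ t : ℕ))) •
            (Pi.single (0 : Fin D) (1 : ℂ) : Fin D → ℂ) := by
    intro σ
    rw [Matrix.smul_mulVec]
    unfold itp
    have e : (List.finRange D).map
          (fun t => ((fun k : Fin D => (diagonal dg : Matrix (Fin D) (Fin D) ℂ) ^ (k : ℕ)) ∘ σ) t * YD)
        = (((List.finRange D).map fun t => ((σ t : ℕ))).map fun a => diagonal dg ^ a * YD) := by
      rw [List.map_map]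
      exact List.map_congr_left fun t _ => rfl
    rw [e, prodAY_mulVec]
    have hlen2 : ((((List.finRange D).map fun t => ((σ t : ℕ))).length : ℕ) : Fin D) = 0 := by
      simp
    rw [hlen2, add_zero, sc_finRange dg D (fun t => (σ t : ℕ)) 0, smul_smul]
    have hprod : ∀ t : Fin D, dg ((0 : Fin D) + (((D - (t : ℕ)) : ℕ) : Fin D)) ^ ((σ t : ℕ))
        = (w t) ^ ((σ t : ℕ)) := by
      intro t; simp only [hw, zero_add]
    rw [Finset.prod_congr rfl fun t _ => hprod t]
  rw [hsum, Finset.sum_congr rfl fun σ _ => hterm σ, ← Finset.sum_smul] at h1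
  have hc0 : (∑ σ : Perm (Fin D), ((Perm.sign σ : ℤ) : ℂ) * ∏ t : Fin D, (w t) ^ ((σ t : ℕ))) = 0 := by
    have := congrFun h1 (0 : Fin D)
    simpa [Pi.single_apply] using this
  have hdet : (∑ σ : Perm (Fin D), ((Perm.sign σ : ℤ) : ℂ) * ∏ t : Fin D, (w t) ^ ((σ t : ℕ)))
      = ((vandermonde w)ᵀ).det := by
    rw [Matrix.det_apply]
    refine Finset.sum_congr rfl fun σ _ => ?_
    simp [Matrix.transpose_apply, Matrix.vandermonde_apply, Units.smul_def, zsmul_eq_mul]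
  rw [hdet, Matrix.det_transpose, Matrix.det_vandermonde] at hc0
  have : ∀ i : Fin D, ∀ j ∈ Finset.Ioi i, (w j - w i) ≠ 0 := by
    intro i j hj
    have : j ≠ i := (Finset.mem_Ioi.mp hj).ne'
    exact sub_ne_zero_of_ne fun h => this (hwinj h)
  exact (Finset.prod_ne_zero_iff.mpr fun i _ =>
    Finset.prod_ne_zero_iff.mpr fun j hj => this i j hj) hc0

noncomputable def wrd {D : ℕ} (σ : Perm (Fin D)) : List (Fin 2) :=
  ((List.finRange D).map fun t => List.replicate ((σ t : ℕ)) (0 : Fin 2) ++ [1]).flatten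

lemma wrd_length {D : ℕ} (σ : Perm (Fin D)) : (wrd σ).length = D * (D - 1) / 2 + D := by
  have h1 : (wrd σ).length = ∑ t : Fin D, ((σ t : ℕ) + 1) := by
    unfold wrd
    rw [List.length_flatten, List.map_map, ← List.ofFn_eq_map, List.sum_ofFn]
    simp
  rw [h1, Finset.sum_add_distrib]
  have h2 : ∑ t : Fin D, ((σ t : ℕ)) = ∑ t : Fin D, (t : ℕ) :=
    Equiv.sum_comp σ (fun t : Fin D => (t : ℕ))
  rw [h2, Fin.sum_univ_eq_sum_range (fun i => i) D, Finset.sum_range_id]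
  simp

lemma eval_eq {D q : ℕ} (m : ℕ) (hm : ∀ σ : Perm (Fin D), (wrd σ).length = m)
    (X : Fin 2 → Matrix (Fin q) (Fin q) ℂ) :
    (∑ j : Fin m → Fin 2,
        (∑ σ : Perm (Fin D), if (fun k : Fin m => (wrd σ).getD (k : ℕ) 0) = j
          then ((Perm.sign σ : ℤ) : ℂ) else 0) • mpsProd X j)
      = ∑ σ : Perm (Fin D), ((Perm.sign σ : ℤ) : ℂ) •
          itp (X 1) ((fun k : Fin D => (X 0) ^ (k : ℕ)) ∘ σ) := by
  classical
  have step1 : ∀ j : Fin m → Fin 2,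
      (∑ σ : Perm (Fin D), if (fun k : Fin m => (wrd σ).getD (k : ℕ) 0) = j
          then ((Perm.sign σ : ℤ) : ℂ) else 0) • mpsProd X j
        = ∑ σ : Perm (Fin D), (if (fun k : Fin m => (wrd σ).getD (k : ℕ) 0) = j
            then ((Perm.sign σ : ℤ) : ℂ) • mpsProd X j else 0) := by
    intro j
    rw [Finset.sum_smul]
    exact Finset.sum_congr rfl fun σ _ => by split <;> simp
  rw [Finset.sum_congr rfl fun j _ => step1 j, Finset.sum_comm]
  refine Finset.sum_congr rfl fun σ _ => ?_
  rw [Finset.sum_ite_eq Finset.univ (fun k : Fin m => (wrd σ).getD (k : ℕ) 0)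
      (fun j => ((Perm.sign σ : ℤ) : ℂ) • mpsProd X j), if_pos (Finset.mem_univ _)]
  congr 1
  have hlen := hm σ
  have e2 : mpsProd X (fun k : Fin m => (wrd σ).getD (k : ℕ) 0) = ((wrd σ).map X).prod := by
    unfold mpsProd
    congr 1
    refine List.ext_getElem (by simp [hlen]) fun i h1 h2 => ?_
    have hi : i < (wrd σ).length := by
      rw [hlen]
      simpa using h1
    simp only [List.getElem_map, List.getElem_finRange, Fin.coe_cast]
    rw [List.getD_eq_getElem _ _ hi]
  rw [e2]
  unfold wrd itp
  rw [List.map_flatten, List.map_map, List.prod_flatten, List.map_map]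
  refine congrArg List.prod (List.map_congr_left fun t _ => ?_)
  simp [List.prod_append, List.prod_replicate, Function.comp]

end Stmt8Aux

open Stmt8Aux in
/-- For every `D ≥ 2` there is a homogeneous bivariate noncommutative polynomial of degree
`m ≤ 2(D−1)(2D+1)` which is a matrix polynomial identity for dimension `D−1` but not for
dimension `D`. -/
theorem stmt8 (D : ℕ) (hD : 2 ≤ D) :
    ∃ m : ℕ, 0 < m ∧ m ≤ 2 * (D - 1) * (2 * D + 1) ∧
      ∃ p : (Fin m → Fin 2) → ℂ,
        (∀ X : Fin 2 → Matrix (Fin (D - 1)) (Fin (D - 1)) ℂ,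
          ∑ j : Fin m → Fin 2, p j • mpsProd X j = 0) ∧
        ∃ X : Fin 2 → Matrix (Fin D) (Fin D) ℂ,
          ∑ j : Fin m → Fin 2, p j • mpsProd X j ≠ 0 := by
  classical
  obtain ⟨n, rfl⟩ : ∃ n, D = n + 1 := ⟨D - 1, by omega⟩
  have hn : 0 < n := by omega
  set m : ℕ := (n + 1) * ((n + 1) - 1) / 2 + (n + 1) with hmdef
  have hm : ∀ σ : Equiv.Perm (Fin (n + 1)), (wrd σ).length = m := fun σ => wrd_length σ
  have hmpos : 0 < m := by
    have : n + 1 ≤ m := Nat.le_add_left _ _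
    omega
  have hmle : m ≤ 2 * ((n + 1) - 1) * (2 * (n + 1) + 1) := by
    have h1 : (n + 1) * ((n + 1) - 1) / 2 ≤ (n + 1) * n := by
      simp only [Nat.add_sub_cancel]
      exact Nat.div_le_self _ _
    rw [hmdef]
    simp only [Nat.add_sub_cancel] at h1 ⊢
    nlinarith [hn, h1]
  refine ⟨m, hmpos, hmle, fun j => ∑ σ : Equiv.Perm (Fin (n + 1)),
    if (fun k : Fin m => (wrd σ).getD (k : ℕ) 0) = j
      then ((Equiv.Perm.sign σ : ℤ) : ℂ) else 0, ?_, ?_⟩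
  · intro X
    rw [eval_eq m hm X]
    exact vanish hn (X 0) (X 1)
  · refine ⟨![Matrix.diagonal dg, YD], ?_⟩
    rw [eval_eq m hm _]
    have hnv := nonvanish (D := n + 1)
    simpa using hnv
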